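/- arXiv:1604.00039 — 3 statements merged into one kernel-verified Lean document; each statement's English description precedes it below -/
import Mathlib

section
/- Let K : ℝ → ℝ be a measurable kernel with ∫ K = 1 and compact support in [-1,1], of order m, i.e. ∫ K(x) x^ℓ dx = 0 for all 1 ≤ ℓ ≤ m. Let f : ℝ → ℝ be m_s times differentiable with |f^{(m_s)}(x) − f^{(m_s)}(y)| ≤ L|x−y|^{s−m_s} for all x, y, where m_s ≤ m and m_s = sup{k ∈ ℕ : k < s}. Then for every h ∈ (0,1] and every x₀ ∈ ℝ, |∫ K_h(x₀ − y) f(y) dy − f(x₀)| ≤ C h^s, where K_h(u) = h⁻¹ K(u/h) and C is a constant depending only on s, L and K (one may take C = L ∫ |K(u)| |u|^s du / (m_s)!). -/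
open MeasureTheory Real intervalIntegral


lemma abs_integral_abs_pow (x₀ x : ℝ) (n : ℕ) :
    |∫ t in x₀..x, |t - x₀|^n| = |x - x₀|^(n+1)/(n+1) := by
  rcases le_total x₀ x with hle | hle
  · have hcong : ∫ t in x₀..x, |t - x₀|^n = ∫ t in x₀..x, (t - x₀)^n := by
      apply intervalIntegral.integral_congr
      intro t ht
      rw [Set.uIcc_of_le hle] at ht
      simp only
      rw [abs_of_nonneg (by linarith [ht.1])]
    rw [hcong, intervalIntegral.integral_comp_sub_right (fun t => t^n) x₀]
    simp only [sub_self, integral_pow, zero_pow (Nat.succ_ne_zero n), sub_zero]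
    rw [abs_of_nonneg (div_nonneg (pow_nonneg (by linarith : (0:ℝ) ≤ x - x₀) _) (by positivity)),
      abs_of_nonneg (by linarith : (0:ℝ) ≤ x - x₀)]
  · have hcong : ∫ t in x₀..x, |t - x₀|^n = ∫ t in x₀..x, (x₀ - t)^n := by
      apply intervalIntegral.integral_congr
      intro t ht
      rw [Set.uIcc_of_ge hle] at ht
      simp only
      rw [abs_of_nonpos (by linarith [ht.2]), neg_sub]
    rw [hcong, intervalIntegral.integral_comp_sub_left (fun t => t^n) x₀]
    simp only [sub_self, integral_pow, zero_pow (Nat.succ_ne_zero n)]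
    rw [abs_of_nonpos (sub_nonpos.2 hle), neg_sub, abs_div, zero_sub, abs_neg,
      abs_of_nonneg (pow_nonneg (by linarith : (0:ℝ) ≤ x₀ - x) _),
      abs_of_nonneg (by positivity : (0:ℝ) ≤ (n:ℝ)+1)]


theorem taylor_bound : ∀ (n : ℕ) (f : ℝ → ℝ), ContDiff ℝ n f → ∀ (x₀ x M : ℝ),
    (∀ y ∈ Set.uIcc x₀ x, |iteratedDeriv n f y - iteratedDeriv n f x₀| ≤ M) →
    |f x - ∑ k ∈ Finset.range (n+1), iteratedDeriv k f x₀ * (x - x₀)^k / k.factorial|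
      ≤ M * |x - x₀|^n / n.factorial := by
  intro n
  induction n with
  | zero =>
    intro f hf x₀ x M hM
    simpa using hM x Set.right_mem_uIcc
  | succ n IH =>
    intro f hf x₀ x M hM
    have hM0 : 0 ≤ M := le_trans (abs_nonneg _) (hM x₀ Set.left_mem_uIcc)
    have hf' : ContDiff ℝ ((n : ℕ∞) + 1) f := by exact_mod_cast hf
    have hfd : Differentiable ℝ f := (contDiff_succ_iff_deriv.mp hf').1
    set g : ℝ → ℝ := deriv f with hg_def
    have hg : ContDiff ℝ n g := (contDiff_succ_iff_deriv.mp hf').2.2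
    -- pointwise bound on g - Q
    have hQbound : ∀ t ∈ Set.uIcc x₀ x,
        |g t - ∑ k ∈ Finset.range (n+1), iteratedDeriv k g x₀ * (t - x₀)^k / k.factorial|
          ≤ M * |t - x₀|^n / n.factorial := by
      intro t ht
      refine IH g hg x₀ t M (fun y hy => ?_)
      have hy' : y ∈ Set.uIcc x₀ x := Set.uIcc_subset_uIcc Set.left_mem_uIcc ht hy
      have := hM y hy'
      rwa [iteratedDeriv_succ', ← hg_def] at this
    set Q : ℝ → ℝ := fun t => ∑ k ∈ Finset.range (n+1),
      iteratedDeriv k g x₀ * (t - x₀)^k / k.factorial with hQ_def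
    have hQcont : Continuous Q := by
      apply continuous_finset_sum
      intro k _
      fun_prop
    -- FTC for f
    have hftc : ∫ t in x₀..x, g t = f x - f x₀ :=
      intervalIntegral.integral_deriv_eq_sub (fun t _ => hfd t)
        (hg.continuous.intervalIntegrable x₀ x)
    -- integral of Q
    have hQint : ∫ t in x₀..x, Q t = ∑ k ∈ Finset.range (n+1),
        iteratedDeriv k g x₀ * (x - x₀)^(k+1) / (k+1).factorial := by
      rw [hQ_def]
      rw [intervalIntegral.integral_finset_sum]
      · apply Finset.sum_congr rfl
        intro k _
        have : (fun t => iteratedDeriv k g x₀ * (t - x₀)^k / k.factorial)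
            = fun t => (iteratedDeriv k g x₀ / k.factorial) * (t - x₀)^k := by
          ext t; ring
        rw [this, intervalIntegral.integral_const_mul,
          intervalIntegral.integral_comp_sub_right (fun t => t^k) x₀]
        simp only [sub_self, integral_pow, zero_pow (Nat.succ_ne_zero k), sub_zero]
        rw [Nat.factorial_succ]
        have h1 : ((k.factorial : ℝ)) ≠ 0 := Nat.cast_ne_zero.2 k.factorial_ne_zero
        have h2 : ((k:ℝ)+1) ≠ 0 := by positivity
        push_cast
        field_simp
      · intro k _
        apply Continuous.intervalIntegrable
        fun_prop
    -- decomposition of the Taylor polynomial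
    have hsum : ∑ k ∈ Finset.range (n+2), iteratedDeriv k f x₀ * (x - x₀)^k / k.factorial
        = f x₀ + ∑ k ∈ Finset.range (n+1),
            iteratedDeriv k g x₀ * (x - x₀)^(k+1) / (k+1).factorial := by
      rw [Finset.sum_range_succ' (fun k => iteratedDeriv k f x₀ * (x - x₀)^k / k.factorial)]
      simp only [iteratedDeriv_zero, pow_zero, mul_one, Nat.factorial_zero, Nat.cast_one,
        div_one]
      rw [add_comm]
      congr 1
      apply Finset.sum_congr rfl
      intro k _
      rw [iteratedDeriv_succ', ← hg_def]
    -- rewrite difference as an integral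
    have hkey : f x - ∑ k ∈ Finset.range (n+2),
        iteratedDeriv k f x₀ * (x - x₀)^k / k.factorial
        = ∫ t in x₀..x, (g t - Q t) := by
      rw [intervalIntegral.integral_sub (hg.continuous.intervalIntegrable x₀ x)
        (hQcont.intervalIntegrable x₀ x), hftc, hQint, hsum]
      ring
    rw [hkey]
    -- bound the integral
    rw [← Real.norm_eq_abs]
    have hb1 : ‖∫ t in x₀..x, (g t - Q t)‖ ≤ |∫ t in x₀..x, M * |t - x₀|^n / n.factorial| := by
      apply intervalIntegral.norm_integral_le_abs_of_norm_le _
        ((Continuous.intervalIntegrable (by fun_prop) x₀ x))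
      filter_upwards [MeasureTheory.ae_restrict_mem measurableSet_uIoc] with t ht
      rw [Real.norm_eq_abs]
      exact hQbound t (Set.uIoc_subset_uIcc ht)
    refine hb1.trans (le_of_eq ?_)
    have hre : (fun t => M * |t - x₀|^n / (n.factorial : ℝ))
        = fun t => (M / n.factorial) * |t - x₀|^n := by ext t; ring
    rw [hre, intervalIntegral.integral_const_mul, abs_mul, abs_integral_abs_pow,
      abs_of_nonneg (div_nonneg hM0 (Nat.cast_nonneg _)), Nat.factorial_succ]
    have h1 : ((n.factorial : ℝ)) ≠ 0 := Nat.cast_ne_zero.2 n.factorial_ne_zero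
    have h2 : ((n:ℝ)+1) ≠ 0 := by positivity
    push_cast
    field_simp


lemma integrable_kernel_mul {K g : ℝ → ℝ} (hKint : Integrable K) (hK_meas : Measurable K)
    (hK_supp : Function.support K ⊆ Set.Icc (-1:ℝ) 1) (hg : Continuous g) :
    Integrable (fun u => K u * g u) := by
  obtain ⟨C, hC⟩ := (isCompact_Icc (a := (-1:ℝ)) (b := 1)).exists_bound_of_continuousOn
    hg.continuousOn
  have hC0 : 0 ≤ C := le_trans (norm_nonneg (g 0)) (hC 0 (by norm_num))
  apply Integrable.mono' (hKint.norm.const_mul C)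
    ((hK_meas.mul hg.measurable).aestronglyMeasurable)
  refine Filter.Eventually.of_forall (fun u => ?_)
  by_cases hu : K u = 0
  · simp only [hu, Pi.mul_apply, zero_mul, norm_zero]
    positivity
  · have hmem := hK_supp (Function.mem_support.2 hu)
    rw [Real.norm_eq_abs, Pi.mul_apply, abs_mul, mul_comm C]
    exact mul_le_mul_of_nonneg_left (hC u hmem) (abs_nonneg _)

lemma kernel_subst (K f : ℝ → ℝ) (h x₀ : ℝ) (hh0 : 0 < h) :
    (∫ y, h⁻¹ * K ((x₀ - y) / h) * f y) = ∫ u, K u * f (x₀ - h * u) := by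
  have e1 : (∫ y, h⁻¹ * K ((x₀ - y) / h) * f y)
      = ∫ y, (fun z => h⁻¹ * K (z / h) * f (x₀ - z)) (x₀ - y) := by
    congr 1; ext y; simp
  rw [e1, integral_sub_left_eq_self (fun z => h⁻¹ * K (z / h) * f (x₀ - z)) volume x₀]
  have e2 := MeasureTheory.Measure.integral_comp_mul_left
    (fun z => h⁻¹ * K (z / h) * f (x₀ - z)) h
  simp only [mul_div_cancel_left₀ _ hh0.ne', abs_of_pos (inv_pos.2 hh0), smul_eq_mul] at e2
  simp only [mul_assoc] at e2
  rw [MeasureTheory.integral_const_mul] at e2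
  have := mul_left_cancel₀ (inv_ne_zero hh0.ne') e2
  simp only [mul_assoc]
  exact this.symm

/-- Classical bias bound for kernel smoothing with a kernel of order `m`. -/
theorem kernel_bias_bound
    (K f : ℝ → ℝ) (m ms : ℕ) (s L : ℝ) (hs : 0 < s) (hL : 0 < L)
    (hK_meas : Measurable K)
    (hK_int : ∫ x, K x = 1)
    (hK_supp : Function.support K ⊆ Set.Icc (-1 : ℝ) 1)
    (hK_order : ∀ ℓ : ℕ, 1 ≤ ℓ → ℓ ≤ m → ∫ x, K x * x ^ ℓ = 0)
    (hms : (ms : ℝ) < s) (hms' : s ≤ ms + 1)   -- ms = sup {k ∈ ℕ : k < s}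
    (hmsm : ms ≤ m)
    (hf : ContDiff ℝ ms f)
    (hHolder : ∀ x y : ℝ, |iteratedDeriv ms f x - iteratedDeriv ms f y| ≤ L * |x - y| ^ (s - ms)) :
    ∀ h : ℝ, h ∈ Set.Ioc (0 : ℝ) 1 → ∀ x₀ : ℝ,
      |(∫ y, h⁻¹ * K ((x₀ - y) / h) * f y) - f x₀| ≤
        (L * (∫ u, |K u| * |u| ^ s) / (Nat.factorial ms)) * h ^ s := by
  intro h hh x₀
  obtain ⟨hh0, hh1⟩ := hh
  have hKint : Integrable K := by
    by_contra hc
    rw [integral_undef hc] at hK_int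
    norm_num at hK_int
  -- the Taylor polynomial of f at x₀
  set P : ℝ → ℝ := fun y => ∑ k ∈ Finset.range (ms+1),
    iteratedDeriv k f x₀ * (y - x₀)^k / k.factorial with hP_def
  have hPcont : Continuous P := by
    apply continuous_finset_sum
    intro k _
    fun_prop
  -- value of the kernel-smoothed polynomial
  have hPval : ∫ u, K u * P (x₀ - h * u) = f x₀ := by
    have hptw : ∀ u : ℝ, K u * P (x₀ - h * u) = ∑ k ∈ Finset.range (ms+1),
        (iteratedDeriv k f x₀ * (-h)^k / k.factorial) * (K u * u^k) := by
      intro u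
      rw [hP_def]
      simp only
      rw [Finset.mul_sum]
      refine Finset.sum_congr rfl (fun k _ => ?_)
      have : (x₀ - h * u - x₀) ^ k = (-h)^k * u^k := by
        rw [show x₀ - h * u - x₀ = (-h) * u by ring, mul_pow]
      rw [this]; ring
    simp_rw [hptw]
    rw [integral_finset_sum _ (fun k _ => Integrable.const_mul
      (integrable_kernel_mul hKint hK_meas hK_supp (continuous_pow k)) _)]
    simp_rw [MeasureTheory.integral_const_mul]
    rw [Finset.sum_range_succ' (fun k => iteratedDeriv k f x₀ * (-h)^k / (k.factorial : ℝ)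
      * ∫ u, K u * u ^ k)]
    have hzero : ∀ k ∈ Finset.range ms, iteratedDeriv (k+1) f x₀ * (-h)^(k+1)
        / ((k+1).factorial : ℝ) * ∫ u, K u * u ^ (k+1) = 0 := by
      intro k hk
      rw [hK_order (k+1) (Nat.succ_le_succ (Nat.zero_le _))
        (Nat.succ_le_of_lt (lt_of_lt_of_le (Finset.mem_range.mp hk) hmsm)), mul_zero]
    rw [Finset.sum_eq_zero hzero, zero_add]
    simp only [pow_zero, mul_one]
    rw [hK_int]
    simp [iteratedDeriv_zero]
  -- pointwise bound on f - P
  have hD : ∀ u : ℝ, |f (x₀ - h * u) - P (x₀ - h * u)| ≤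
      L * (h ^ s * |u| ^ s) / ms.factorial := by
    intro u
    set x := x₀ - h * u with hx_def
    have hxx : |x - x₀| = h * |u| := by
      rw [show x - x₀ = (-h) * u by rw [hx_def]; ring, abs_mul, abs_neg, abs_of_pos hh0]
    have hmain := taylor_bound ms f hf x₀ x (L * |x - x₀| ^ (s - (ms:ℝ))) ?_
    · refine hmain.trans (le_of_eq ?_)
      have h1 : |x - x₀| ^ (ms:ℕ) = |x - x₀| ^ ((ms:ℝ)) := (Real.rpow_natCast _ _).symm
      rw [h1, mul_assoc, ← Real.rpow_add' (abs_nonneg _) (by rw [sub_add_cancel]; exact hs.ne'),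
        sub_add_cancel, hxx, Real.mul_rpow hh0.le (abs_nonneg _)]
    · intro y hy
      refine (hHolder y x₀).trans ?_
      have hle : |y - x₀| ≤ |x - x₀| := Set.abs_sub_left_of_mem_uIcc hy
      exact mul_le_mul_of_nonneg_left
        (Real.rpow_le_rpow (abs_nonneg _) hle (by linarith)) hL.le
  -- integrability facts
  have haff : Continuous fun u : ℝ => x₀ - h * u := by fun_prop
  have hint1 : Integrable (fun u => K u * f (x₀ - h * u)) :=
    integrable_kernel_mul hKint hK_meas hK_supp (hf.continuous.comp haff)
  have hint2 : Integrable (fun u => K u * P (x₀ - h * u)) :=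
    integrable_kernel_mul hKint hK_meas hK_supp (hPcont.comp haff)
  have hintD : Integrable (fun u => K u * (f (x₀ - h * u) - P (x₀ - h * u))) :=
    integrable_kernel_mul hKint hK_meas hK_supp
      ((hf.continuous.comp haff).sub (hPcont.comp haff))
  have hintR : Integrable (fun u => |K u| * (L * (h ^ s * |u| ^ s) / ms.factorial)) := by
    apply Integrable.mono' (hKint.norm.const_mul (L * (h ^ s * 1) / ms.factorial))
    · have hcont2 : Continuous fun u : ℝ => L * (h ^ s * |u| ^ s) / (ms.factorial : ℝ) :=
        (continuous_const.mul (continuous_const.mul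
          (continuous_abs.rpow_const (fun x => Or.inr hs.le)))).div_const _
      exact hK_meas.abs.aestronglyMeasurable.mul hcont2.aestronglyMeasurable
    · refine Filter.Eventually.of_forall (fun u => ?_)
      by_cases hu : K u = 0
      · simp [hu]
      · have hmem := hK_supp (Function.mem_support.2 hu)
        have hus : |u| ^ s ≤ 1 := Real.rpow_le_one (abs_nonneg _)
          (abs_le.2 ⟨hmem.1, hmem.2⟩) hs.le
        rw [Real.norm_eq_abs, abs_mul, abs_abs,
          abs_of_nonneg (by positivity : (0:ℝ) ≤ L * (h ^ s * |u| ^ s) / ms.factorial),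
          mul_comm (L * (h ^ s * 1) / (ms.factorial:ℝ)) _]
        apply mul_le_mul_of_nonneg_left _ (abs_nonneg _)
        gcongr
  -- main computation
  rw [kernel_subst K f h x₀ hh0, ← hPval, ← integral_sub hint1 hint2]
  simp_rw [← mul_sub]
  calc |∫ u, K u * (f (x₀ - h * u) - P (x₀ - h * u))|
      ≤ ∫ u, |K u * (f (x₀ - h * u) - P (x₀ - h * u))| := by
        rw [← Real.norm_eq_abs]
        refine (MeasureTheory.norm_integral_le_integral_norm _).trans (le_of_eq ?_)
        simp only [Real.norm_eq_abs]
    _ ≤ ∫ u, |K u| * (L * (h ^ s * |u| ^ s) / ms.factorial) := by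
        apply integral_mono hintD.abs hintR
        intro u
        dsimp only
        rw [abs_mul]
        exact mul_le_mul_of_nonneg_left (hD u) (abs_nonneg _)
    _ = (L * (∫ u, |K u| * |u| ^ s) / ms.factorial) * h ^ s := by
        have : (fun u => |K u| * (L * (h ^ s * |u| ^ s) / ms.factorial))
            = fun u => (L * h ^ s / ms.factorial) * (|K u| * |u| ^ s) := by
          ext u; ring
        rw [this, MeasureTheory.integral_const_mul]
        ring
end

section
/- Let a, b, c > 0 and suppose a nonnegative sequence (ρ_r)_{r≥1} satisfies ρ_r ≤ c·exp(−a r^b) for all r ≥ 1. Then for every k ∈ ℕ the series Σ_{r≥0} (1+r)^k ρ_r^{1/4} converges, and there exist constants L₁, L₂ > 0 depending only on a, b, c such that Σ_{r≥0} (1+r)^k ρ_r^{1/4} ≤ L₁ L₂^k (k!)^{1/b} for all k ∈ ℕ. -/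
open Real

lemma aux_pow_le_exp_mul_fact (x : ℝ) (hx : 0 ≤ x) (n : ℕ) :
    x ^ n ≤ Real.exp x * (Nat.factorial n : ℝ) := by
  have h := Real.pow_div_factorial_le_exp x hx n
  have hn : (0:ℝ) < (Nat.factorial n : ℝ) := by exact_mod_cast n.factorial_pos
  calc x ^ n = x ^ n / (Nat.factorial n : ℝ) * (Nat.factorial n : ℝ) := by field_simp
  _ ≤ Real.exp x * (Nat.factorial n : ℝ) := mul_le_mul_of_nonneg_right h hn.le

lemma claimA (γ b : ℝ) (hγ : 0 < γ) (hb : 0 < b) (k : ℕ) (x : ℝ) (hx : 0 ≤ x) :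
    (max 1 x) ^ k ≤ Real.exp (γ * x ^ b) *
      max 1 ((Nat.factorial ⌈(k:ℝ)/b⌉₊ : ℝ) / γ ^ ⌈(k:ℝ)/b⌉₊) := by
  set m := ⌈(k:ℝ)/b⌉₊ with hm
  have hexp1 : (1:ℝ) ≤ Real.exp (γ * x ^ b) := by
    apply Real.one_le_exp; positivity
  have hD1 : (1:ℝ) ≤ max 1 ((Nat.factorial m : ℝ) / γ ^ m) := le_max_left _ _
  rcases le_total x 1 with h1 | h1
  · rw [max_eq_left h1, one_pow]
    exact one_le_mul_of_one_le_of_one_le hexp1 hD1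
  · rw [max_eq_right h1]
    have hk : (k:ℝ) ≤ b * m := by
      have := Nat.le_ceil ((k:ℝ)/b)
      rw [div_le_iff₀ hb] at this
      linarith
    have hx0 : (0:ℝ) < x := lt_of_lt_of_le one_pos h1
    have step1 : x ^ k ≤ x ^ (b * (m:ℝ)) := by
      rw [← Real.rpow_natCast x k]
      exact Real.rpow_le_rpow_of_exponent_le h1 hk
    have step2 : x ^ (b * (m:ℝ)) = (x ^ b) ^ m := by
      rw [Real.rpow_mul hx0.le, Real.rpow_natCast]
    have step3 : (x ^ b) ^ m ≤ Real.exp (γ * x ^ b) * ((Nat.factorial m : ℝ) / γ ^ m) := by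
      have ht : (0:ℝ) ≤ γ * x ^ b := by positivity
      have h2 := aux_pow_le_exp_mul_fact _ ht m
      rw [mul_pow] at h2
      have hγm : (0:ℝ) < γ ^ m := by positivity
      rw [mul_div_assoc', le_div_iff₀ hγm, mul_comm ((x^b)^m)]
      linarith
    calc x ^ k ≤ (x ^ b) ^ m := step2 ▸ step1
    _ ≤ Real.exp (γ * x ^ b) * ((Nat.factorial m : ℝ) / γ ^ m) := step3
    _ ≤ _ := mul_le_mul_of_nonneg_left (le_max_right _ _) (Real.exp_pos _).le

lemma rpow_div_eq (g : ℝ) (hg : 0 ≤ g) (k : ℕ) (b : ℝ) :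
    g ^ ((k:ℝ)/b) = (g ^ (1/b : ℝ)) ^ k := by
  rw [← Real.rpow_natCast (g ^ (1/b : ℝ)) k, ← Real.rpow_mul hg]
  ring_nf

lemma Dk_bound (γ b : ℝ) (hγ : 0 < γ) (hb : 0 < b) :
    ∃ C₁ C₂ : ℝ, 1 ≤ C₁ ∧ 1 ≤ C₂ ∧ ∀ k : ℕ,
      max 1 ((Nat.factorial ⌈(k:ℝ)/b⌉₊ : ℝ) / γ ^ ⌈(k:ℝ)/b⌉₊) ≤
        C₁ * C₂ ^ k * (Nat.factorial k : ℝ) ^ (1/b : ℝ) := by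
  set g : ℝ := max 1 γ⁻¹ with hgdef
  set A : ℝ := 1 + 1/b with hAdef
  have hg1 : (1:ℝ) ≤ g := le_max_left _ _
  have hg0 : (0:ℝ) < g := lt_of_lt_of_le one_pos hg1
  have hA1 : (1:ℝ) ≤ A := by rw [hAdef]; nlinarith [one_div_pos.mpr hb]
  have hA0 : (0:ℝ) < A := lt_of_lt_of_le one_pos hA1
  have hgb : (1:ℝ) ≤ g ^ (1/b : ℝ) := Real.one_le_rpow hg1 (by positivity)
  have hAb : (1:ℝ) ≤ A ^ (1/b : ℝ) := Real.one_le_rpow hA1 (by positivity)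
  have he1 : (1:ℝ) ≤ Real.exp (1/b) := Real.one_le_exp (by positivity)
  have hC2 : (1:ℝ) ≤ g ^ (1/b : ℝ) * A ^ (1/b : ℝ) * 2 * Real.exp (1/b) := by
    have a1 := one_le_mul_of_one_le_of_one_le hgb hAb
    have a2 := one_le_mul_of_one_le_of_one_le a1 (by norm_num : (1:ℝ) ≤ 2)
    exact one_le_mul_of_one_le_of_one_le a2 he1
  refine ⟨g * A, g ^ (1/b : ℝ) * A ^ (1/b : ℝ) * 2 * Real.exp (1/b),
    one_le_mul_of_one_le_of_one_le hg1 hA1, hC2, ?_⟩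
  intro k
  have hfact1 : (1:ℝ) ≤ (Nat.factorial k : ℝ) ^ (1/b : ℝ) := by
    apply Real.one_le_rpow (by exact_mod_cast k.factorial_pos) (by positivity)
  have hRHS1 : (1:ℝ) ≤ g * A * (g ^ (1/b:ℝ) * A ^ (1/b:ℝ) * 2 * Real.exp (1/b)) ^ k
      * (Nat.factorial k : ℝ) ^ (1/b : ℝ) := by
    have h1 : (1:ℝ) ≤ (g ^ (1/b:ℝ) * A ^ (1/b:ℝ) * 2 * Real.exp (1/b)) ^ k :=
      one_le_pow₀ hC2
    have h2 := one_le_mul_of_one_le_of_one_le (one_le_mul_of_one_le_of_one_le hg1 hA1) h1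
    exact one_le_mul_of_one_le_of_one_le h2 hfact1
  rcases Nat.eq_zero_or_pos k with rfl | hk
  · simpa using hRHS1
  · apply max_le (hRHS1)
    have hk1 : (1:ℝ) ≤ (k:ℝ) := by exact_mod_cast hk
    set m := ⌈(k:ℝ)/b⌉₊ with hmdef
    have hm1 : (m:ℝ) ≤ (k:ℝ)/b + 1 := (Nat.ceil_lt_add_one (by positivity)).le
    have hmAk : (m:ℝ) ≤ A * k := by
      rw [hAdef]
      have : (k:ℝ)/b = (k:ℝ) * (1/b) := by ring
      nlinarith [one_div_pos.mpr hb]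
    have hAk1 : (1:ℝ) ≤ A * k := by nlinarith
    -- step 1 : m!/γ^m ≤ m^m * g^m
    have s1 : (Nat.factorial m : ℝ) / γ ^ m ≤ (m:ℝ) ^ m * g ^ m := by
      rw [div_eq_mul_inv, ← inv_pow]
      apply mul_le_mul ?_ (pow_le_pow_left₀ (by positivity) (le_max_right _ _) m)
        (by positivity) (by positivity)
      exact_mod_cast Nat.factorial_le_pow m
    -- step 2 : g^m ≤ g * (g^{1/b})^k
    have s2 : g ^ m ≤ g * (g ^ (1/b:ℝ)) ^ k := by
      calc g ^ m = g ^ (m:ℝ) := (Real.rpow_natCast g m).symm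
      _ ≤ g ^ ((k:ℝ)/b + 1) := Real.rpow_le_rpow_of_exponent_le hg1 hm1
      _ = g ^ ((k:ℝ)/b) * g := by rw [Real.rpow_add hg0, Real.rpow_one]
      _ = g * (g ^ (1/b:ℝ)) ^ k := by rw [rpow_div_eq g hg0.le k b]; ring
    -- step 3 : m^m ≤ (A*k)^{k/b+1}
    have s3 : (m:ℝ) ^ m ≤ (A*k) ^ ((k:ℝ)/b + 1) := by
      calc (m:ℝ) ^ m = (m:ℝ) ^ (m:ℝ) := (Real.rpow_natCast _ m).symm
      _ ≤ (A*k) ^ (m:ℝ) := Real.rpow_le_rpow (by positivity) hmAk (by positivity)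
      _ ≤ (A*k) ^ ((k:ℝ)/b + 1) := Real.rpow_le_rpow_of_exponent_le hAk1 hm1
    -- step 4 : (A*k)^{k/b+1} = A^{k/b} * k^{k/b} * (A*k)
    have s4 : (A*k) ^ ((k:ℝ)/b + 1) = (A ^ (1/b:ℝ)) ^ k * (k:ℝ) ^ ((k:ℝ)/b) * (A*k) := by
      rw [Real.rpow_add (by positivity), Real.rpow_one,
        Real.mul_rpow hA0.le (by positivity), rpow_div_eq A hA0.le k b]
    -- step 5 : k^{k/b} ≤ exp(1/b)^k * (k!)^{1/b}
    have s5 : (k:ℝ) ^ ((k:ℝ)/b) ≤ (Real.exp (1/b)) ^ k * (Nat.factorial k : ℝ) ^ (1/b:ℝ) := by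
      have h1 : (k:ℝ) ^ ((k:ℝ)/b) = ((k:ℝ) ^ k) ^ (1/b:ℝ) := by
        rw [← Real.rpow_natCast (k:ℝ) k, ← Real.rpow_mul (by positivity)]
        ring_nf
      have h2 : ((k:ℝ) ^ k) ^ (1/b:ℝ) ≤ (Real.exp k * (Nat.factorial k : ℝ)) ^ (1/b:ℝ) :=
        Real.rpow_le_rpow (by positivity) (aux_pow_le_exp_mul_fact _ (by positivity) k)
          (by positivity)
      have hee : (Real.exp (k:ℝ)) ^ (1/b : ℝ) = (Real.exp (1/b)) ^ k := by
        rw [← Real.exp_mul, show (k:ℝ) * (1/b) = (1/b) * (k:ℝ) by ring,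
          Real.exp_mul, Real.rpow_natCast]
      have h3 : (Real.exp k * (Nat.factorial k : ℝ)) ^ (1/b:ℝ) =
          (Real.exp (1/b)) ^ k * (Nat.factorial k : ℝ) ^ (1/b:ℝ) := by
        rw [Real.mul_rpow (Real.exp_pos _).le (by positivity), hee]
      rw [h1]; linarith [h2.trans_eq h3]
    -- step 6 : k ≤ 2^k
    have s6 : (k:ℝ) ≤ 2 ^ k := by exact_mod_cast (Nat.lt_two_pow_self (n := k)).le
    -- combine
    calc (Nat.factorial m : ℝ) / γ ^ m ≤ (m:ℝ) ^ m * g ^ m := s1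
    _ ≤ ((A ^ (1/b:ℝ)) ^ k * (k:ℝ) ^ ((k:ℝ)/b) * (A*k)) * (g * (g ^ (1/b:ℝ)) ^ k) := by
        apply mul_le_mul (s3.trans_eq s4) s2 (by positivity) (by positivity)
    _ ≤ ((A ^ (1/b:ℝ)) ^ k * ((Real.exp (1/b)) ^ k * (Nat.factorial k : ℝ) ^ (1/b:ℝ))
          * (A * 2^k)) * (g * (g ^ (1/b:ℝ)) ^ k) := by
        gcongr <;> positivity
    _ = g * A * (g ^ (1/b:ℝ) * A ^ (1/b:ℝ) * 2 * Real.exp (1/b)) ^ k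
          * (Nat.factorial k : ℝ) ^ (1/b:ℝ) := by
        rw [mul_pow, mul_pow, mul_pow]; ring

/-- Summability estimate: geometric decay of `ρ_r` yields factorial-type bounds on
weighted sums `Σ (1+r)^k ρ_r^{1/4}`. -/
theorem weighted_sum_factorial_bound
    (a b c : ℝ) (ha : 0 < a) (hb : 0 < b) (hc : 0 < c)
    (ρ : ℕ → ℝ) (hρ_nonneg : ∀ r, 0 ≤ ρ r)
    (hρ : ∀ r : ℕ, ρ r ≤ c * Real.exp (-a * (r : ℝ) ^ b)) :
    (∀ k : ℕ, Summable (fun r : ℕ => (1 + (r : ℝ)) ^ k * ρ r ^ (1 / 4 : ℝ))) ∧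
      ∃ L₁ L₂ : ℝ, 0 < L₁ ∧ 0 < L₂ ∧ ∀ k : ℕ,
        ∑' r : ℕ, (1 + (r : ℝ)) ^ k * ρ r ^ (1 / 4 : ℝ) ≤
          L₁ * L₂ ^ k * (Nat.factorial k : ℝ) ^ (1 / b) := by
  set γ : ℝ := a / 8 with hγdef
  have hγ : 0 < γ := by positivity
  obtain ⟨C₁, C₂, hC₁, hC₂, hDb⟩ := Dk_bound γ b hγ hb
  set D : ℕ → ℝ := fun k => max 1 ((Nat.factorial ⌈(k:ℝ)/b⌉₊ : ℝ) / γ ^ ⌈(k:ℝ)/b⌉₊) with hDdef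
  have hD1 : ∀ k, (1:ℝ) ≤ D k := fun k => le_max_left _ _
  set F : ℕ → ℝ := fun r => Real.exp (-γ * (r:ℝ) ^ b) with hFdef
  have hFpos : ∀ r, 0 < F r := fun r => Real.exp_pos _
  have hAcl : ∀ (k : ℕ) (r : ℕ), (max 1 ((r:ℝ))) ^ k ≤ Real.exp (γ * (r:ℝ) ^ b) * D k :=
    fun k r => claimA γ b hγ hb k ((r:ℝ)) (Nat.cast_nonneg r)
  have honepl : ∀ r : ℕ, (1 + (r:ℝ)) ≤ 2 * max 1 (r:ℝ) := by
    intro r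
    rcases le_total ((r:ℝ)) 1 with h | h
    · rw [max_eq_left h]; linarith
    · rw [max_eq_right h]; linarith
  have hρ4 : ∀ r : ℕ, ρ r ^ (1/4:ℝ) ≤ c ^ (1/4:ℝ) * Real.exp (-(a/4) * (r:ℝ) ^ b) := by
    intro r
    have h1 : ρ r ^ (1/4:ℝ) ≤ (c * Real.exp (-a * (r:ℝ) ^ b)) ^ (1/4:ℝ) :=
      Real.rpow_le_rpow (hρ_nonneg r) (hρ r) (by norm_num)
    have h2 : (c * Real.exp (-a * (r:ℝ) ^ b)) ^ (1/4:ℝ)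
        = c ^ (1/4:ℝ) * Real.exp (-(a/4) * (r:ℝ) ^ b) := by
      rw [Real.mul_rpow hc.le (Real.exp_pos _).le, ← Real.exp_mul]
      ring_nf
    exact h1.trans_eq h2
  have key : ∀ (k r : ℕ), (1 + (r:ℝ)) ^ k * ρ r ^ (1/4:ℝ) ≤
      (c ^ (1/4:ℝ) * 2 ^ k * D k) * F r := by
    intro k r
    have e1 : (1 + (r:ℝ)) ^ k ≤ 2 ^ k * (max 1 (r:ℝ)) ^ k := by
      rw [← mul_pow]
      exact pow_le_pow_left₀ (by positivity) (honepl r) k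
    have ecan : Real.exp (γ * (r:ℝ) ^ b) * Real.exp (-(a/4) * (r:ℝ) ^ b) = F r := by
      rw [hFdef, ← Real.exp_add]; congr 1; rw [hγdef]; ring
    calc (1 + (r:ℝ)) ^ k * ρ r ^ (1/4:ℝ)
        ≤ (2 ^ k * (max 1 (r:ℝ)) ^ k) * (c ^ (1/4:ℝ) * Real.exp (-(a/4) * (r:ℝ) ^ b)) := by
          apply mul_le_mul e1 (hρ4 r) (Real.rpow_nonneg (hρ_nonneg r) _) (by positivity)
      _ ≤ (2 ^ k * (Real.exp (γ * (r:ℝ) ^ b) * D k)) *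
            (c ^ (1/4:ℝ) * Real.exp (-(a/4) * (r:ℝ) ^ b)) := by
          gcongr
          exact hAcl k r
      _ = (c ^ (1/4:ℝ) * 2 ^ k * D k) *
            (Real.exp (γ * (r:ℝ) ^ b) * Real.exp (-(a/4) * (r:ℝ) ^ b)) := by ring
      _ = (c ^ (1/4:ℝ) * 2 ^ k * D k) * F r := by rw [ecan]
  have hFsum : Summable F := by
    have hbound : ∀ r : ℕ, F r ≤ 4 * D 2 * (1 / (1 + (r:ℝ)) ^ 2) := by
      intro r
      have hpos : (0:ℝ) < (1 + (r:ℝ)) ^ 2 := by positivity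
      rw [mul_one_div, le_div_iff₀ hpos]
      have h1 : (1 + (r:ℝ)) ^ 2 ≤ 4 * (Real.exp (γ * (r:ℝ) ^ b) * D 2) := by
        have := pow_le_pow_left₀ (by positivity : (0:ℝ) ≤ 1 + (r:ℝ)) (honepl r) 2
        rw [mul_pow] at this
        nlinarith [hAcl 2 r]
      have ecan : F r * Real.exp (γ * (r:ℝ) ^ b) = 1 := by
        rw [hFdef, ← Real.exp_add]
        simpa using Real.exp_zero
      calc F r * (1 + (r:ℝ)) ^ 2 ≤ F r * (4 * (Real.exp (γ * (r:ℝ) ^ b) * D 2)) := by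
            exact mul_le_mul_of_nonneg_left h1 (hFpos r).le
        _ = 4 * D 2 * (F r * Real.exp (γ * (r:ℝ) ^ b)) := by ring
        _ = 4 * D 2 := by rw [ecan, mul_one]
    apply Summable.of_nonneg_of_le (fun r => (hFpos r).le) hbound
    apply Summable.mul_left
    have h0 : Summable (fun n : ℕ => 1 / ((n:ℝ)) ^ 2) :=
      summable_one_div_nat_pow.mpr (by norm_num)
    have h1 := (_root_.summable_nat_add_iff 1).mpr h0
    apply h1.congr
    intro n
    push_cast
    ring_nf
  have hgsum : ∀ k : ℕ, Summable (fun r : ℕ => (1 + (r:ℝ)) ^ k * ρ r ^ (1/4:ℝ)) := by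
    intro k
    apply Summable.of_nonneg_of_le ?_ (key k) (hFsum.mul_left _)
    intro r
    exact mul_nonneg (by positivity) (Real.rpow_nonneg (hρ_nonneg r) _)
  refine ⟨hgsum, ?_⟩
  set T : ℝ := ∑' r, F r with hTdef
  have hT0 : 0 < T := Summable.tsum_pos hFsum (fun r => (hFpos r).le) 0 (hFpos 0)
  refine ⟨c ^ (1/4:ℝ) * C₁ * T, 2 * C₂, by positivity, by positivity, ?_⟩
  intro k
  have hb1 : ∑' r : ℕ, (1 + (r:ℝ)) ^ k * ρ r ^ (1/4:ℝ) ≤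
      ∑' r : ℕ, (c ^ (1/4:ℝ) * 2 ^ k * D k) * F r :=
    Summable.tsum_le_tsum (key k) (hgsum k) (hFsum.mul_left _)
  rw [tsum_mul_left] at hb1
  calc ∑' r : ℕ, (1 + (r:ℝ)) ^ k * ρ r ^ (1/4:ℝ)
      ≤ (c ^ (1/4:ℝ) * 2 ^ k * D k) * T := hb1
    _ ≤ (c ^ (1/4:ℝ) * 2 ^ k * (C₁ * C₂ ^ k * (Nat.factorial k : ℝ) ^ (1/b:ℝ))) * T := by
        gcongr
        exact hDb k
    _ = c ^ (1/4:ℝ) * C₁ * T * (2 * C₂) ^ k * (Nat.factorial k : ℝ) ^ (1/b:ℝ) := by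
        rw [mul_pow]; ring
end

section
/- Let H be a finite set of positive reals, and for each h ∈ H let f̂_h, M(h) be real numbers with M(h) ≥ 0. Define A(h) = max_{𝔥 ∈ H} { |f̂_{h∨𝔥} − f̂_𝔥| − M(h∨𝔥) − M(𝔥) }₊ and let ĥ ∈ H minimize h ↦ A(h) + M(h) over H. Then for every h ∈ H and every real number f₀, |f̂_{ĥ} − f₀| ≤ 2A(h) + 2M(h) + |f̂_h − f₀|, where h∨𝔥 = max(h,𝔥) and {y}₊ = max(y,0). -/
open Finset

/-- Deterministic core of the Goldenshluger–Lepski bandwidth selection argument. -/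
theorem goldenshluger_lepski_deterministic
    (H : Finset ℝ) (hne : H.Nonempty) (hpos : ∀ h ∈ H, 0 < h)
    (fhat M : ℝ → ℝ) (hM : ∀ h ∈ H, 0 ≤ M h)
    (A : ℝ → ℝ)
    (hA : ∀ h, A h = H.sup' hne fun 𝔥 =>
      max (|fhat (max h 𝔥) - fhat 𝔥| - M (max h 𝔥) - M 𝔥) 0)
    (hhat : ℝ) (hhat_mem : hhat ∈ H)
    (hhat_min : ∀ h ∈ H, A hhat + M hhat ≤ A h + M h) :
    ∀ h ∈ H, ∀ f₀ : ℝ, |fhat hhat - f₀| ≤ 2 * A h + 2 * M h + |fhat h - f₀| := by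
  intro h hmem f₀
  have hAhat : (0:ℝ) ≤ A hhat := by
    rw [hA]
    exact le_trans (le_max_right _ 0) (le_sup' (fun 𝔥 => max (|fhat (max hhat 𝔥) - fhat 𝔥| - M (max hhat 𝔥) - M 𝔥) 0) hhat_mem)
  have hAh : (0:ℝ) ≤ A h := by
    rw [hA]
    exact le_trans (le_max_right _ 0) (le_sup' (fun 𝔥 => max (|fhat (max h 𝔥) - fhat 𝔥| - M (max h 𝔥) - M 𝔥) 0) hmem)
  have hmin := hhat_min h hmem
  have hMh := hM h hmem
  have hMhat := hM hhat hhat_mem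
  have htri : |fhat hhat - f₀| ≤ |fhat hhat - fhat h| + |fhat h - f₀| := by
    calc |fhat hhat - f₀| = |(fhat hhat - fhat h) + (fhat h - f₀)| := by ring_nf
    _ ≤ _ := abs_add_le _ _
  rcases le_total h hhat with hle | hle
  · have key : |fhat (max hhat h) - fhat h| - M (max hhat h) - M h ≤ A hhat := by
      rw [hA]
      exact le_trans (le_max_left _ 0) (le_sup' (fun 𝔥 => max (|fhat (max hhat 𝔥) - fhat 𝔥| - M (max hhat 𝔥) - M 𝔥) 0) hmem)
    rw [max_eq_left hle] at key
    linarith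
  · have key : |fhat (max h hhat) - fhat hhat| - M (max h hhat) - M hhat ≤ A h := by
      rw [hA]
      exact le_trans (le_max_left _ 0) (le_sup' (fun 𝔥 => max (|fhat (max h 𝔥) - fhat 𝔥| - M (max h 𝔥) - M 𝔥) 0) hhat_mem)
    rw [max_eq_left hle] at key
    rw [abs_sub_comm] at key
    linarith
end
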